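/- For the control system x' = A_x x + A_{xy} y + B_x u with Gaussian state (x,y) of positive definite covariance Σ and input u Gaussian of covariance Σ_u, independent of the state, the conditional covariance of x' given x is A_{xy} Σ_x^s A_{xy}^⊤ + B_x Σ_u B_x^⊤, where Σ_x^s is the Schur complement of Σ_x in Σ; when u is frozen it is A_{xy} Σ_x^s A_{xy}^⊤; consequently the one-step information transfer from u to x equals (1/2) log( det(A_{xy} Σ_x^s A_{xy}^⊤ + B_x Σ_u B_x^⊤) / det(A_{xy} Σ_x^s A_{xy}^⊤) ), provided A_{xy} Σ_x^s A_{xy}^⊤ is invertible. -/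

import Mathlib

open Matrix

/-- Gaussian entropy `(1/2) log((2πe)^d det Σ)`. -/
noncomputable def gaussEntropy (d : ℕ) (S : Matrix (Fin d) (Fin d) ℝ) : ℝ :=
  (1 / 2) * Real.log ((2 * Real.pi * Real.exp 1) ^ d * S.det)

lemma posDef_of_posSemidef_isUnit {n : ℕ} {M : Matrix (Fin n) (Fin n) ℝ}
    (h : M.PosSemidef) (hd : IsUnit M.det) : M.PosDef := by
  rw [Matrix.posDef_iff_dotProduct_mulVec]
  refine ⟨h.1, fun x hx => lt_of_le_of_ne (h.dotProduct_mulVec_nonneg x) fun he => hx ?_⟩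
  have h0 : M *ᵥ x = 0 := (h.dotProduct_mulVec_zero_iff x).mp he.symm
  have hxx : M⁻¹ *ᵥ (M *ᵥ x) = x := by
    rw [Matrix.mulVec_mulVec, Matrix.nonsing_inv_mul _ hd, Matrix.one_mulVec]
  rw [h0, Matrix.mulVec_zero] at hxx
  exact hxx.symm

lemma posDef_block₁₁ {p q : ℕ} {A : Matrix (Fin p) (Fin p) ℝ}
    {B : Matrix (Fin p) (Fin q) ℝ} {C : Matrix (Fin q) (Fin p) ℝ}
    {D : Matrix (Fin q) (Fin q) ℝ}
    (h : (Matrix.fromBlocks A B C D).PosDef) : A.PosDef := by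
  rw [Matrix.posDef_iff_dotProduct_mulVec]
  constructor
  · have h1 := h.1
    rw [Matrix.IsHermitian, Matrix.fromBlocks_conjTranspose] at h1
    have := congrArg Matrix.toBlocks₁₁ h1
    simpa [Matrix.toBlocks_fromBlocks₁₁, Matrix.IsSymm] using this
  · intro x hx
    have hv : (Sum.elim x (0 : Fin q → ℝ)) ≠ 0 := by
      intro hz
      apply hx
      funext i
      exact congrFun hz (Sum.inl i)
    have := h.dotProduct_mulVec_pos (x := Sum.elim x 0) hv
    simpa [Matrix.fromBlocks_mulVec, Matrix.mulVec_zero] using this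

theorem information_transfer_u_to_x {p q r : ℕ}
    (Ax : Matrix (Fin p) (Fin p) ℝ) (Axy : Matrix (Fin p) (Fin q) ℝ)
    (Bx : Matrix (Fin p) (Fin r) ℝ)
    (Sx : Matrix (Fin p) (Fin p) ℝ) (Sxy : Matrix (Fin p) (Fin q) ℝ)
    (Sy : Matrix (Fin q) (Fin q) ℝ) (Su : Matrix (Fin r) (Fin r) ℝ)
    (hS : (Matrix.fromBlocks Sx Sxy Sxyᵀ Sy).PosDef) (hSu : Su.PosDef)
    (hinv : IsUnit (Axy * (Sy - Sxyᵀ * Sx⁻¹ * Sxy) * Axyᵀ).det) :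
    -- the covariance of x' and the cross covariance of (x', x)
    (Ax * Sx * Axᵀ + Ax * Sxy * Axyᵀ + Axy * Sxyᵀ * Axᵀ + Axy * Sy * Axyᵀ + Bx * Su * Bxᵀ)
        - (Ax * Sx + Axy * Sxyᵀ) * Sx⁻¹ * (Ax * Sx + Axy * Sxyᵀ)ᵀ
      = Axy * (Sy - Sxyᵀ * Sx⁻¹ * Sxy) * Axyᵀ + Bx * Su * Bxᵀ
    ∧ (Ax * Sx * Axᵀ + Ax * Sxy * Axyᵀ + Axy * Sxyᵀ * Axᵀ + Axy * Sy * Axyᵀ)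
        - (Ax * Sx + Axy * Sxyᵀ) * Sx⁻¹ * (Ax * Sx + Axy * Sxyᵀ)ᵀ
      = Axy * (Sy - Sxyᵀ * Sx⁻¹ * Sxy) * Axyᵀ
    ∧ gaussEntropy p (Axy * (Sy - Sxyᵀ * Sx⁻¹ * Sxy) * Axyᵀ + Bx * Su * Bxᵀ)
        - gaussEntropy p (Axy * (Sy - Sxyᵀ * Sx⁻¹ * Sxy) * Axyᵀ)
      = (1 / 2) * Real.log
          ((Axy * (Sy - Sxyᵀ * Sx⁻¹ * Sxy) * Axyᵀ + Bx * Su * Bxᵀ).det /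
            (Axy * (Sy - Sxyᵀ * Sx⁻¹ * Sxy) * Axyᵀ).det) := by
  have hSx : Sx.PosDef := posDef_block₁₁ hS
  have hdet : IsUnit Sx.det := hSx.det_pos.ne'.isUnit
  have hT : Sxᵀ = Sx := by
    have := hSx.1
    rwa [Matrix.IsHermitian, Matrix.conjTranspose_eq_transpose_of_trivial] at this
  have h2 : (Ax * Sx + Axy * Sxyᵀ) * Sx⁻¹ * (Ax * Sx + Axy * Sxyᵀ)ᵀ
      = Ax * Sx * Axᵀ + Ax * Sxy * Axyᵀ + (Axy * Sxyᵀ * Axᵀ + Axy * (Sxyᵀ * Sx⁻¹ * Sxy) * Axyᵀ) := by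
    rw [Matrix.transpose_add, Matrix.transpose_mul, Matrix.transpose_mul, hT]
    simp only [Matrix.transpose_transpose, Matrix.add_mul, Matrix.mul_add, Matrix.mul_assoc,
      Matrix.nonsing_inv_mul_cancel_left _ _ hdet,
      Matrix.mul_nonsing_inv_cancel_left _ _ hdet]
    abel
  have halg : (Ax * Sx * Axᵀ + Ax * Sxy * Axyᵀ + Axy * Sxyᵀ * Axᵀ + Axy * Sy * Axyᵀ)
        - (Ax * Sx + Axy * Sxyᵀ) * Sx⁻¹ * (Ax * Sx + Axy * Sxyᵀ)ᵀ
      = Axy * (Sy - Sxyᵀ * Sx⁻¹ * Sxy) * Axyᵀ := by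
    rw [h2, Matrix.mul_sub, Matrix.sub_mul]
    abel
  refine ⟨?_, halg, ?_⟩
  · calc (Ax * Sx * Axᵀ + Ax * Sxy * Axyᵀ + Axy * Sxyᵀ * Axᵀ + Axy * Sy * Axyᵀ + Bx * Su * Bxᵀ)
        - (Ax * Sx + Axy * Sxyᵀ) * Sx⁻¹ * (Ax * Sx + Axy * Sxyᵀ)ᵀ
        = ((Ax * Sx * Axᵀ + Ax * Sxy * Axyᵀ + Axy * Sxyᵀ * Axᵀ + Axy * Sy * Axyᵀ)
          - (Ax * Sx + Axy * Sxyᵀ) * Sx⁻¹ * (Ax * Sx + Axy * Sxyᵀ)ᵀ) + Bx * Su * Bxᵀ := by abel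
      _ = Axy * (Sy - Sxyᵀ * Sx⁻¹ * Sxy) * Axyᵀ + Bx * Su * Bxᵀ := by rw [halg]
  · -- entropy computation
    have hSchur : (Sy - Sxyᵀ * Sx⁻¹ * Sxy).PosSemidef := by
      have _inst : Invertible Sx := hSx.isUnit.invertible
      have := (Matrix.PosDef.fromBlocks₁₁ Sxy Sy hSx).mp
      rw [Matrix.conjTranspose_eq_transpose_of_trivial] at this
      exact this hS.posSemidef
    have hS2 : (Axy * (Sy - Sxyᵀ * Sx⁻¹ * Sxy) * Axyᵀ).PosDef := by
      apply posDef_of_posSemidef_isUnit _ hinv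
      have := hSchur.mul_mul_conjTranspose_same Axy
      rwa [Matrix.conjTranspose_eq_transpose_of_trivial] at this
    have hS1 : (Axy * (Sy - Sxyᵀ * Sx⁻¹ * Sxy) * Axyᵀ + Bx * Su * Bxᵀ).PosDef := by
      apply hS2.add_posSemidef
      have := hSu.posSemidef.mul_mul_conjTranspose_same Bx
      rwa [Matrix.conjTranspose_eq_transpose_of_trivial] at this
    have d1 : (0:ℝ) < (Axy * (Sy - Sxyᵀ * Sx⁻¹ * Sxy) * Axyᵀ + Bx * Su * Bxᵀ).det := hS1.det_pos
    have d2 : (0:ℝ) < (Axy * (Sy - Sxyᵀ * Sx⁻¹ * Sxy) * Axyᵀ).det := hS2.det_pos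
    have hc : (0:ℝ) < (2 * Real.pi * Real.exp 1) ^ p := by positivity
    unfold gaussEntropy
    rw [← mul_sub, ← Real.log_div (by positivity) (by positivity),
      mul_div_mul_left _ _ hc.ne']
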